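/- Let v(x) = |x|^{-2/3} (log log(|x| + e))^{-ν} on ℝ³ with 0 < ν ≤ 2/9. Then ∫_{ℝ³} v(x)^{9/2} (log(2 + 1/v(x)))^{-1} dx = ∞. -/

import Mathlib

open MeasureTheory Metric Filter ENNReal

noncomputable section

abbrev E3 := EuclideanSpace ℝ (Fin 3)

/-- Lorentz quasinorm on a set `Ω` (with `ℓ = ∞` giving the weak norm). -/
noncomputable def lorentzNorm {α F : Type*} [MeasurableSpace α] [NormedAddCommGroup F]
    (μ : Measure α) (p ℓ : ℝ≥0∞) (f : α → F) (Ω : Set α) : ℝ≥0∞ :=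
  if ℓ = ⊤ then
    ⨆ σ : NNReal, (σ : ℝ≥0∞) * (μ {x | x ∈ Ω ∧ (σ : ℝ) < ‖f x‖}) ^ (1 / p).toReal
  else
    (∫⁻ σ in Set.Ioi (0 : ℝ),
        ENNReal.ofReal (σ ^ (ℓ.toReal - 1)) *
          (μ {x | x ∈ Ω ∧ σ < ‖f x‖}) ^ (ℓ / p).toReal) ^ (1 / ℓ).toReal

/-- The annulus `B(R) \ B(R/2)` centered at the origin in `ℝ³`. -/
def ann (R : ℝ) : Set E3 := Metric.ball (0 : E3) R \ Metric.ball (0 : E3) (R / 2)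

/-- Divergence of a vector field on `ℝ³`. -/
noncomputable def divg (u : E3 → E3) (x : E3) : ℝ :=
  ∑ i, fderiv ℝ u x (EuclideanSpace.single i 1) i

/-- Componentwise Laplacian of a vector field on `ℝ³`. -/
noncomputable def lap (u : E3 → E3) (x : E3) : E3 :=
  ∑ i, fderiv ℝ (fun y => fderiv ℝ u y (EuclideanSpace.single i 1)) x (EuclideanSpace.single i 1)

/-- Convective term `(u · ∇) u`. -/
noncomputable def conv (u : E3 → E3) (x : E3) : E3 := fderiv ℝ u x (u x)

/-- Gradient of a scalar function on `ℝ³`. -/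
noncomputable def gradp (p : E3 → ℝ) (x : E3) : E3 :=
  ∑ i, fderiv ℝ p x (EuclideanSpace.single i 1) • EuclideanSpace.single i 1

/-- The steady Navier–Stokes system `-Δu + (u·∇)u + ∇p = 0`, `div u = 0`. -/
def SteadyNS (u : E3 → E3) (p : E3 → ℝ) : Prop :=
  (∀ x, -lap u x + conv u x + gradp p x = 0) ∧ (∀ x, divg u x = 0)

/-! ### Auxiliary material for `stmt_14` -/

section Aux

open Set Measure

set_option maxHeartbeats 1000000

/-- Polar-coordinate formula for lower integrals of radial functions. -/
lemma lintegral_fun_norm_addHaar' {E : Type*} [NormedAddCommGroup E] [NormedSpace ℝ E]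
    [MeasurableSpace E] [BorelSpace E] [Nontrivial E] [FiniteDimensional ℝ E]
    (μ : Measure E) [μ.IsAddHaarMeasure] (g : ℝ → ℝ≥0∞) (hg : Measurable g) :
    ∫⁻ x, g ‖x‖ ∂μ =
      μ.toSphere Set.univ * ∫⁻ y in Set.Ioi (0:ℝ),
        ENNReal.ofReal (y ^ (Module.finrank ℝ E - 1)) * g y := by
  have hmeas : Measurable (fun p : sphere (0:E) 1 × Set.Ioi (0:ℝ) => g ↑p.2) :=
    hg.comp (measurable_subtype_coe.comp measurable_snd)
  have h1 : ∫⁻ x, g ‖x‖ ∂μ = ∫⁻ x : ({0}ᶜ : Set E), g ‖(x:E)‖ ∂(μ.comap (↑)) := by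
    rw [lintegral_subtype_comap (measurableSet_singleton (0:E)).compl (fun x => g ‖x‖),
      restrict_compl_singleton]
  have h2 : ∫⁻ x : ({0}ᶜ : Set E), g ‖(x:E)‖ ∂(μ.comap (↑)) =
      ∫⁻ p : sphere (0:E) 1 × Set.Ioi (0:ℝ), g ↑p.2
        ∂(μ.toSphere.prod (volumeIoiPow (Module.finrank ℝ E - 1))) := by
    have := μ.measurePreserving_homeomorphUnitSphereProd.lintegral_comp
      (f := fun p : sphere (0:E) 1 × Set.Ioi (0:ℝ) => g ↑p.2) hmeas
    simpa using this
  have h3 : ∫⁻ p : sphere (0:E) 1 × Set.Ioi (0:ℝ), g ↑p.2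
        ∂(μ.toSphere.prod (volumeIoiPow (Module.finrank ℝ E - 1))) =
      μ.toSphere Set.univ * ∫⁻ y : Set.Ioi (0:ℝ), g ↑y
        ∂(volumeIoiPow (Module.finrank ℝ E - 1)) := by
    rw [lintegral_prod (fun p : sphere (0:E) 1 × Set.Ioi (0:ℝ) => g ↑p.2) hmeas.aemeasurable]
    simp [lintegral_const, mul_comm]
  have h4 : ∫⁻ y : Set.Ioi (0:ℝ), g ↑y ∂(volumeIoiPow (Module.finrank ℝ E - 1)) =
      ∫⁻ y in Set.Ioi (0:ℝ), ENNReal.ofReal (y ^ (Module.finrank ℝ E - 1)) * g y := by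
    have hwd := lintegral_withDensity_eq_lintegral_mul
      (Measure.comap (Subtype.val : Set.Ioi (0:ℝ) → ℝ) volume)
      (f := fun r : Set.Ioi (0:ℝ) => ENNReal.ofReal (↑r ^ (Module.finrank ℝ E - 1)))
      ((measurable_subtype_coe.pow_const _).ennreal_ofReal)
      (g := fun y : Set.Ioi (0:ℝ) => g ↑y) (hg.comp measurable_subtype_coe)
    rw [Measure.volumeIoiPow]
    refine hwd.trans ?_
    rw [← lintegral_subtype_comap measurableSet_Ioi
        (fun y : ℝ => ENNReal.ofReal (y ^ (Module.finrank ℝ E - 1)) * g y)]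
    rfl
  rw [h1, h2, h3, h4]

/-- A convenient large threshold. -/
abbrev Rbig : ℝ := Real.exp (Real.exp (Real.exp 1))

lemma Rbig_facts {r : ℝ} (hr : Rbig ≤ r) :
    1 < r ∧ 1 < Real.log r ∧ 1 < Real.log (Real.log r) := by
  have e1 : (1:ℝ) < Real.exp 1 := by
    have := Real.exp_one_gt_d9; linarith
  have e2 : Real.exp 1 < Real.exp (Real.exp 1) := Real.exp_lt_exp.2 e1
  have e3 : Real.exp (Real.exp 1) < Rbig := Real.exp_lt_exp.2 e2
  have hr1 : 1 < r := by linarith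
  have hlr : Real.exp (Real.exp 1) ≤ Real.log r := by
    have := Real.log_le_log (Real.exp_pos _) hr
    rwa [Real.log_exp] at this
  have hllr : Real.exp 1 ≤ Real.log (Real.log r) := by
    have := Real.log_le_log (Real.exp_pos _) hlr
    rwa [Real.log_exp] at this
  exact ⟨hr1, by linarith, by linarith⟩

lemma hasDeriv_F {r : ℝ} (h1 : 1 < r) (h2 : 1 < Real.log r) (h3 : 1 < Real.log (Real.log r)) :
    HasDerivAt (fun x => Real.log (Real.log (Real.log x)) / 8)
      ((8 * (r * (Real.log r * Real.log (Real.log r))))⁻¹) r := by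
  have d1 : HasDerivAt Real.log r⁻¹ r := Real.hasDerivAt_log (by linarith)
  have d2 : HasDerivAt (fun x => Real.log (Real.log x)) ((Real.log r)⁻¹ * r⁻¹) r :=
    (Real.hasDerivAt_log (by linarith)).comp r d1
  have d3 : HasDerivAt (fun x => Real.log (Real.log (Real.log x)))
      ((Real.log (Real.log r))⁻¹ * ((Real.log r)⁻¹ * r⁻¹)) r :=
    (Real.hasDerivAt_log (by linarith)).comp r d2
  have := d3.div_const 8
  refine this.congr_deriv ?_
  ring

lemma ftc_int {T : ℝ} (hT : Rbig ≤ T) :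
    ∫ r in Rbig..T, (8 * (r * (Real.log r * Real.log (Real.log r))))⁻¹
      = Real.log (Real.log (Real.log T)) / 8 - Real.log (Real.log (Real.log Rbig)) / 8 := by
  have hcont : ContinuousOn (fun r : ℝ => (8 * (r * (Real.log r * Real.log (Real.log r))))⁻¹)
      (Set.uIcc Rbig T) := by
    rw [Set.uIcc_of_le hT]
    intro x hx
    obtain ⟨a1, a2, a3⟩ := Rbig_facts hx.1
    have c1 : ContinuousAt Real.log x := Real.continuousAt_log (by linarith)
    have c2 : ContinuousAt (fun y => Real.log (Real.log y)) x :=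
      (Real.continuousAt_log (by linarith)).comp c1
    exact ((continuousAt_const.mul (continuousAt_id.mul (c1.mul c2))).inv₀
      (by
        show (8:ℝ) * (x * (Real.log x * Real.log (Real.log x))) ≠ 0
        exact mul_ne_zero (by norm_num)
          (mul_ne_zero (by linarith) (mul_ne_zero (by linarith) (by linarith))))).continuousWithinAt
  rw [intervalIntegral.integral_eq_sub_of_hasDerivAt
    (f := fun x => Real.log (Real.log (Real.log x)) / 8)
    (fun x hx => by
      rw [Set.uIcc_of_le hT] at hx
      obtain ⟨a1, a2, a3⟩ := Rbig_facts hx.1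
      exact hasDeriv_F a1 a2 a3)
    (hcont.intervalIntegrable)]

lemma phi_intable {T : ℝ} (hT : Rbig ≤ T) :
    IntervalIntegrable (fun r : ℝ => (8 * (r * (Real.log r * Real.log (Real.log r))))⁻¹)
      volume Rbig T := by
  apply ContinuousOn.intervalIntegrable
  rw [Set.uIcc_of_le hT]
  intro x hx
  obtain ⟨a1, a2, a3⟩ := Rbig_facts hx.1
  have c1 : ContinuousAt Real.log x := Real.continuousAt_log (by linarith)
  have c2 : ContinuousAt (fun y => Real.log (Real.log y)) x :=
    (Real.continuousAt_log (by linarith)).comp c1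
  exact ((continuousAt_const.mul (continuousAt_id.mul (c1.mul c2))).inv₀
    (by
      show (8:ℝ) * (x * (Real.log x * Real.log (Real.log x))) ≠ 0
      exact mul_ne_zero (by norm_num)
        (mul_ne_zero (by linarith) (mul_ne_zero (by linarith) (by linarith))))).continuousWithinAt

lemma lintegral_Ioi_top (h : ℝ → ℝ≥0∞)
    (hb : ∀ r : ℝ, Rbig ≤ r →
      ENNReal.ofReal ((8 * (r * (Real.log r * Real.log (Real.log r))))⁻¹) ≤ h r) :
    ∫⁻ r in Set.Ioi (0:ℝ), h r = ⊤ := by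
  apply ENNReal.eq_top_of_forall_nnreal_le
  intro c
  set T := Real.exp (Real.exp (Real.exp (8 * (c:ℝ) + 1))) with hTdef
  have hc0 : (0:ℝ) ≤ (c:ℝ) := c.2
  have hT : Rbig ≤ T := by
    apply Real.exp_le_exp.2
    apply Real.exp_le_exp.2
    apply Real.exp_le_exp.2
    linarith
  have hRlog : Real.log (Real.log (Real.log Rbig)) = 1 := by
    simp [Rbig, Real.log_exp]
  have hTlog : Real.log (Real.log (Real.log T)) = 8 * (c:ℝ) + 1 := by
    simp [hTdef, Real.log_exp]
  have hint : ∫ r in Rbig..T, (8 * (r * (Real.log r * Real.log (Real.log r))))⁻¹ = (c:ℝ) := by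
    rw [ftc_int hT, hRlog, hTlog]; ring
  have step1 : (c : ℝ≥0∞) ≤
      ∫⁻ r in Set.Ioc Rbig T,
        ENNReal.ofReal ((8 * (r * (Real.log r * Real.log (Real.log r))))⁻¹) := by
    rw [← ENNReal.ofReal_coe_nnreal, ← hint,
      intervalIntegral.integral_of_le hT]
    rw [MeasureTheory.ofReal_integral_eq_lintegral_ofReal]
    · exact (intervalIntegrable_iff_integrableOn_Ioc_of_le hT).1 (phi_intable hT)
    · filter_upwards [ae_restrict_mem measurableSet_Ioc] with r hr
      obtain ⟨a1, a2, a3⟩ := Rbig_facts hr.1.le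
      positivity
  have step2 : ∫⁻ r in Set.Ioc Rbig T,
        ENNReal.ofReal ((8 * (r * (Real.log r * Real.log (Real.log r))))⁻¹)
      ≤ ∫⁻ r in Set.Ioc Rbig T, h r := by
    apply lintegral_mono_ae
    filter_upwards [ae_restrict_mem measurableSet_Ioc] with r hr
    exact hb r hr.1.le
  have step3 : ∫⁻ r in Set.Ioc Rbig T, h r ≤ ∫⁻ r in Set.Ioi (0:ℝ), h r := by
    apply lintegral_mono_set
    intro r hr
    have : (0:ℝ) < Rbig := Real.exp_pos _
    exact lt_trans this hr.1
  exact step1.trans (step2.trans step3)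

lemma pointwise_bound (ν : ℝ) (hν0 : 0 < ν) (hν : ν ≤ 2 / 9) {r : ℝ} (hr : Rbig ≤ r) :
    (8 * (r * (Real.log r * Real.log (Real.log r))))⁻¹ ≤
      r ^ 2 * ((r ^ (-(2:ℝ)/3) * Real.log (Real.log (r + Real.exp 1)) ^ (-ν)) ^ ((9:ℝ)/2) *
        (Real.log (2 + 1 / (r ^ (-(2:ℝ)/3) * Real.log (Real.log (r + Real.exp 1)) ^ (-ν))))⁻¹) := by
  obtain ⟨h1r, h1l, h1ll⟩ := Rbig_facts hr
  have hr0 : (0:ℝ) < r := by linarith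
  have he1 : (1:ℝ) < Real.exp 1 := by have := Real.exp_one_gt_d9; linarith
  have her : Real.exp 1 ≤ r := by
    have : Real.exp 1 ≤ Rbig := by
      apply Real.exp_le_exp.2
      have : (1:ℝ) < Real.exp (Real.exp 1) := by
        calc (1:ℝ) < Real.exp 1 := he1
        _ < Real.exp (Real.exp 1) := Real.exp_lt_exp.2 he1
      linarith
    linarith
  have hr2 : (2:ℝ) ≤ r := by linarith [Real.exp_one_gt_d9]
  set l1 := Real.log r with hl1
  set l2 := Real.log (Real.log r) with hl2
  set L := Real.log (Real.log (r + Real.exp 1)) with hL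
  have hl1r : l1 < r := by
    have := Real.log_le_sub_one_of_pos hr0; rw [← hl1] at this; linarith
  have hl2l1 : l2 < l1 := by
    have := Real.log_le_sub_one_of_pos (by linarith : (0:ℝ) < l1)
    rw [← hl2] at this; linarith
  have hlogre : Real.log (r + Real.exp 1) ≤ 2 * l1 := by
    have h1 : r + Real.exp 1 ≤ r * r := by nlinarith
    have h2 : Real.log (r + Real.exp 1) ≤ Real.log (r * r) :=
      Real.log_le_log (by linarith) h1
    rw [Real.log_mul (by linarith) (by linarith)] at h2
    linarith
  have hlogre' : l1 ≤ Real.log (r + Real.exp 1) :=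
    Real.log_le_log hr0 (by linarith)
  have hLle : L ≤ 2 * l2 := by
    have h2 : L ≤ Real.log (2 * l1) := Real.log_le_log (by linarith) hlogre
    rw [Real.log_mul (by norm_num) (by linarith)] at h2
    have hlog2 : Real.log 2 ≤ 1 := by
      have := Real.log_le_sub_one_of_pos (by norm_num : (0:ℝ) < 2); linarith
    linarith
  have hLge : l2 ≤ L := Real.log_le_log (by linarith) hlogre'
  have hL1 : 1 < L := by linarith
  have hL0 : (0:ℝ) < L := by linarith
  set w := r ^ (-(2:ℝ)/3) * L ^ (-ν) with hw
  have hw0 : 0 < w := by positivity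
  have hwpow : w ^ ((9:ℝ)/2) = r ^ (-(3:ℝ)) * L ^ (-(ν * (9/2))) := by
    rw [hw, Real.mul_rpow (Real.rpow_nonneg hr0.le _) (Real.rpow_nonneg hL0.le _),
      ← Real.rpow_mul hr0.le, ← Real.rpow_mul hL0.le]
    norm_num
  have hwinv : 1 / w = r ^ ((2:ℝ)/3) * L ^ ν := by
    rw [hw, one_div, mul_inv, ← Real.rpow_neg hr0.le, ← Real.rpow_neg hL0.le]
    norm_num
  have hb1 : r ^ ((2:ℝ)/3) ≤ r := by
    nth_rewrite 2 [← Real.rpow_one r]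
    exact Real.rpow_le_rpow_of_exponent_le h1r.le (by norm_num)
  have hb2 : L ^ ν ≤ 2 * r := by
    have h1 : L ^ ν ≤ L ^ (1:ℝ) :=
      Real.rpow_le_rpow_of_exponent_le hL1.le (by linarith)
    rw [Real.rpow_one] at h1
    linarith
  have hwinvle : 1 / w ≤ 2 * r ^ 2 := by
    rw [hwinv]
    calc r ^ ((2:ℝ)/3) * L ^ ν ≤ r * (2 * r) := by
          apply mul_le_mul hb1 hb2 (Real.rpow_nonneg hL0.le _) hr0.le
      _ = 2 * r ^ 2 := by ring
  have hwinv0 : 0 < 1 / w := by positivity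
  have hlogw_pos : 0 < Real.log (2 + 1 / w) := Real.log_pos (by linarith)
  have hlogw_le : Real.log (2 + 1 / w) ≤ 4 * l1 := by
    have h4 : (4:ℝ) ≤ r * r := by nlinarith
    have h1 : 2 + 1 / w ≤ (r * r) * (r * r) := by
      nlinarith [mul_le_mul_of_nonneg_right h4 (by positivity : (0:ℝ) ≤ r * r)]
    have h2 := Real.log_le_log (by linarith) h1
    rw [Real.log_mul (by positivity) (by positivity),
      Real.log_mul (by linarith) (by linarith)] at h2
    linarith
  have hA : (2 * l2)⁻¹ ≤ L ^ (-(ν * (9/2))) := by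
    rw [Real.rpow_neg hL0.le]
    apply inv_anti₀ (by positivity)
    calc L ^ (ν * (9/2)) ≤ L ^ (1:ℝ) :=
          Real.rpow_le_rpow_of_exponent_le hL1.le (by linarith)
      _ = L := Real.rpow_one L
      _ ≤ 2 * l2 := hLle
  have hB : (4 * l1)⁻¹ ≤ (Real.log (2 + 1 / w))⁻¹ := inv_anti₀ hlogw_pos hlogw_le
  have hr23 : r ^ 2 * r ^ (-(3:ℝ)) = r⁻¹ := by
    rw [← Real.rpow_natCast r 2, ← Real.rpow_add hr0]
    norm_num [Real.rpow_neg_one]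
  calc (8 * (r * (l1 * l2)))⁻¹ = r⁻¹ * ((2 * l2)⁻¹ * (4 * l1)⁻¹) := by
        rw [← mul_inv, ← mul_inv]; ring_nf
    _ ≤ r⁻¹ * (L ^ (-(ν * (9/2))) * (Real.log (2 + 1 / w))⁻¹) := by
        apply mul_le_mul_of_nonneg_left _ (by positivity)
        apply mul_le_mul hA hB (by positivity) (by positivity)
    _ = r ^ 2 * (w ^ ((9:ℝ)/2) * (Real.log (2 + 1 / w))⁻¹) := by
        rw [hwpow, ← hr23]; ring

/-- The profile `w` and the radial integrand `g`. -/
def wfun (ν : ℝ) (r : ℝ) : ℝ :=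
  r ^ (-(2:ℝ)/3) * Real.log (Real.log (r + Real.exp 1)) ^ (-ν)

def gfun (ν : ℝ) (r : ℝ) : ℝ≥0∞ :=
  ENNReal.ofReal (wfun ν r ^ ((9:ℝ)/2) * (Real.log (2 + 1 / wfun ν r))⁻¹)

lemma wfun_meas (ν : ℝ) : Measurable (wfun ν) := by
  unfold wfun; measurability

lemma gfun_meas (ν : ℝ) : Measurable (gfun ν) := by
  unfold gfun
  have hw := wfun_meas ν
  apply Measurable.ennreal_ofReal
  apply Measurable.mul
  · measurability
  · exact (measurable_const.add (measurable_const.div hw)).log.inv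

lemma radial_top (ν : ℝ) (hν0 : 0 < ν) (hν : ν ≤ 2 / 9) :
    ∫⁻ y in Set.Ioi (0:ℝ), ENNReal.ofReal (y ^ 2) * gfun ν y = ⊤ := by
  apply lintegral_Ioi_top
  intro r hr
  calc ENNReal.ofReal ((8 * (r * (Real.log r * Real.log (Real.log r))))⁻¹)
      ≤ ENNReal.ofReal (r ^ 2 * (wfun ν r ^ ((9:ℝ)/2) * (Real.log (2 + 1 / wfun ν r))⁻¹)) :=
        ENNReal.ofReal_le_ofReal (pointwise_bound ν hν0 hν hr)
    _ = ENNReal.ofReal (r ^ 2) * gfun ν r := ENNReal.ofReal_mul (sq_nonneg r)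

end Aux

theorem stmt_14 (ν : ℝ) (hν0 : 0 < ν) (hν : ν ≤ 2 / 9)
    (v : E3 → ℝ)
    (hv : v = fun x : E3 =>
      ‖x‖ ^ (-(2 : ℝ) / 3) * (Real.log (Real.log (‖x‖ + Real.exp 1))) ^ (-ν)) :
    ∫⁻ x : E3, ENNReal.ofReal (v x ^ ((9 : ℝ) / 2) * (Real.log (2 + 1 / v x))⁻¹) = ⊤ := by
  subst hv
  have hfr : Module.finrank ℝ E3 = 3 := finrank_euclideanSpace_fin
  have key := lintegral_fun_norm_addHaar' (volume : Measure E3) (gfun ν) (gfun_meas ν)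
  rw [hfr] at key
  have hgoal : (∫⁻ x : E3, ENNReal.ofReal
      ((fun x : E3 => ‖x‖ ^ (-(2 : ℝ) / 3) *
          (Real.log (Real.log (‖x‖ + Real.exp 1))) ^ (-ν)) x ^ ((9 : ℝ) / 2) *
        (Real.log (2 + 1 / (fun x : E3 => ‖x‖ ^ (-(2 : ℝ) / 3) *
          (Real.log (Real.log (‖x‖ + Real.exp 1))) ^ (-ν)) x))⁻¹))
      = ∫⁻ x : E3, gfun ν ‖x‖ := rfl
  rw [hgoal, key, radial_top ν hν0 hν]
  apply ENNReal.mul_top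
  rw [Measure.toSphere_apply_univ, hfr]
  refine mul_ne_zero (by norm_num) ?_
  exact (measure_ball_pos volume (0 : E3) one_pos).ne'
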